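/- Let n ≥ 6, let G = Equiv.Perm (Fin n) be the symmetric group on n letters, and let m be the product of all prime numbers that are ≤ n. In FreeGroup (Fin 4) with free generators x₀, x₁, x₂, x₃, set w₁ = x₁ * x₀^m * x₁⁻¹, w₂ = x₂ * x₀^m * x₂⁻¹, w₃ = x₃ * x₀^m * x₃⁻¹. Then each of w₁, w₂, w₃ is an E-type iterated identity of G, while their product w = w₁ * w₂ * w₃ is not an E-type iterated identity of G. -/

import Mathlib

noncomputable section

/-- The verbal map: evaluate `w` with the variable of index `0` set to `x`
and the variable of index `i` set to `f i` for `i ≠ 0`. -/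
def verbalMap {n : ℕ} [NeZero n] {G : Type*} [Group G] (w : FreeGroup (Fin n))
    (f : Fin n → G) : G → G :=
  fun x => FreeGroup.lift (Function.update f 0 x) w

/-- `w` is an E-type (Engel type) iterated identity of `G`. -/
def IsEIteratedIdentity {n : ℕ} [NeZero n] (w : FreeGroup (Fin n)) (G : Type*) [Group G] : Prop :=
  ∀ f : Fin n → G, ∃ d : ℕ, 1 ≤ d ∧ (verbalMap w f)^[d] (f 0) = 1

/-- `G` has iterational depth at most `D` with respect to `w`. -/
def DepthAtMost {n : ℕ} [NeZero n] (w : FreeGroup (Fin n)) (G : Type*) [Group G] (D : ℕ) : Prop :=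
  ∀ f : Fin n → G, ∃ d : ℕ, 1 ≤ d ∧ d ≤ D ∧ (verbalMap w f)^[d] (f 0) = 1

/- ### Auxiliary lemmas -/

lemma conj_iter {G : Type*} [Group G] (c x : G) (M : ℕ) (d : ℕ) :
    (fun y => c * y ^ M * c⁻¹)^[d] x = c ^ d * x ^ (M ^ d) * (c ^ d)⁻¹ := by
  induction d with
  | zero => simp
  | succ d ih =>
    rw [Function.iterate_succ_apply', ih, conj_pow, ← pow_mul, ← pow_succ]
    group

lemma dvd_pow_of_prime_dvd {k M : ℕ} (hk : 0 < k) (h : ∀ p : ℕ, p.Prime → p ∣ k → p ∣ M) :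
    k ∣ M ^ k := by
  induction k using Nat.strong_induction_on with
  | _ k ih =>
    rcases eq_or_lt_of_le (show 1 ≤ k from hk) with h1 | h1
    · simp [← h1]
    · have hk2 : 2 ≤ k := h1
      have hp : k.minFac.Prime := Nat.minFac_prime (by omega)
      set p := k.minFac
      have hpk : p ∣ k := Nat.minFac_dvd k
      obtain ⟨k', hk'⟩ := hpk
      have hp2 : 2 ≤ p := hp.two_le
      have hk'pos : 0 < k' := by
        rcases Nat.eq_zero_or_pos k' with h0 | h0
        · subst h0; simp at hk'; omega
        · exact h0
      have hk'lt : k' < k := by nlinarith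
      have hIH := ih k' hk'lt hk'pos (fun q hq hqk' => h q hq (hk' ▸ Dvd.dvd.mul_left hqk' p))
      have hpM : p ∣ M := h p hp (hk' ▸ Dvd.intro k' rfl)
      calc k = p * k' := hk'
        _ ∣ M * M ^ k' := mul_dvd_mul hpM hIH
        _ = M ^ (k' + 1) := by ring
        _ ∣ M ^ k := pow_dvd_pow M (by omega)

/- ### The explicit permutations in `S₆` -/

def sig6 : Equiv.Perm (Fin 6) :=
  Equiv.swap 0 1 * Equiv.swap 1 2 * Equiv.swap 2 3 * Equiv.swap 4 5

def tau2 : Equiv.Perm (Fin 6) := Equiv.swap 2 3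

def tau3 : Equiv.Perm (Fin 6) :=
  Equiv.swap 0 1 * Equiv.swap 1 4 * (Equiv.swap 2 3 * Equiv.swap 3 5)

set_option maxRecDepth 10000 in
lemma sig6_pow_four : sig6 ^ 4 = 1 := by decide

lemma sig6_ne_one : sig6 ≠ 1 := by decide

set_option maxRecDepth 10000 in
lemma key_identity :
    sig6 ^ 2 * (tau2 * sig6 ^ 2 * tau2⁻¹) * (tau3 * sig6 ^ 2 * tau3⁻¹) = sig6 := by decide

/-- In the symmetric group `S_n` (`n ≥ 6`), with `m` the product of all primes `≤ n`, the
words `w₁ = x₁ x₀^m x₁⁻¹`, `w₂ = x₂ x₀^m x₂⁻¹`, `w₃ = x₃ x₀^m x₃⁻¹` are E-type iterated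
identities, but their product `w₁ w₂ w₃` is not. -/
theorem symmetric_group_product_not_iterated_identity (n : ℕ) (hn : 6 ≤ n)
    (m : ℕ) (hm : m = ∏ p ∈ (Finset.range (n + 1)).filter Nat.Prime, p)
    (w₁ w₂ w₃ : FreeGroup (Fin 4))
    (h₁ : w₁ = FreeGroup.of 1 * (FreeGroup.of 0) ^ m * (FreeGroup.of 1)⁻¹)
    (h₂ : w₂ = FreeGroup.of 2 * (FreeGroup.of 0) ^ m * (FreeGroup.of 2)⁻¹)
    (h₃ : w₃ = FreeGroup.of 3 * (FreeGroup.of 0) ^ m * (FreeGroup.of 3)⁻¹) :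
    IsEIteratedIdentity w₁ (Equiv.Perm (Fin n)) ∧
    IsEIteratedIdentity w₂ (Equiv.Perm (Fin n)) ∧
    IsEIteratedIdentity w₃ (Equiv.Perm (Fin n)) ∧
    ¬ IsEIteratedIdentity (w₁ * w₂ * w₃) (Equiv.Perm (Fin n)) := by
  have hm_prime_dvd : ∀ p : ℕ, p.Prime → p ≤ n → p ∣ m := by
    intro p hp hpn
    rw [hm]
    exact Finset.dvd_prod_of_mem _
      (Finset.mem_filter.2 ⟨Finset.mem_range.2 (by omega), hp⟩)
  -- positive part, uniformly
  have pos : ∀ (w : FreeGroup (Fin 4)) (i : Fin 4), i ≠ 0 →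
      w = FreeGroup.of i * (FreeGroup.of 0) ^ m * (FreeGroup.of i)⁻¹ →
      IsEIteratedIdentity w (Equiv.Perm (Fin n)) := by
    intro w i hi hw f
    have hvm : verbalMap w f = fun x => f i * x ^ m * (f i)⁻¹ := by
      funext x
      simp [verbalMap, hw, Function.update_of_ne hi, Function.update_self]
    set k := orderOf (f 0) with hk
    have hkpos : 0 < k := orderOf_pos _
    refine ⟨k, hkpos, ?_⟩
    have hcard : k ∣ Nat.factorial n := by
      have h := orderOf_dvd_card (x := f 0)
      rwa [Fintype.card_perm, Fintype.card_fin] at h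
    have hdvd : k ∣ m ^ k := by
      apply dvd_pow_of_prime_dvd hkpos
      intro p hp hpk
      exact hm_prime_dvd p hp ((Nat.Prime.dvd_factorial hp).mp (hpk.trans hcard))
    have hone : (f 0) ^ (m ^ k) = 1 := orderOf_dvd_iff_pow_eq_one.mp hdvd
    rw [hvm, conj_iter, hone]
    group
  refine ⟨pos w₁ 1 (by decide) h₁, pos w₂ 2 (by decide) h₂, pos w₃ 3 (by decide) h₃, ?_⟩
  -- m ≡ 2 (mod 4)
  have hm2 : m % 4 = 2 := by
    have h2mem : (2 : ℕ) ∈ (Finset.range (n + 1)).filter Nat.Prime :=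
      Finset.mem_filter.2 ⟨Finset.mem_range.2 (by omega), Nat.prime_two⟩
    have hsplit : m = 2 * ∏ p ∈ ((Finset.range (n + 1)).filter Nat.Prime).erase 2, p := by
      rw [hm]; exact (Finset.mul_prod_erase _ (fun p => p) h2mem).symm
    set t := ∏ p ∈ ((Finset.range (n + 1)).filter Nat.Prime).erase 2, p with ht
    have hodd : ¬ 2 ∣ t := by
      intro h2t
      obtain ⟨q, hq, h2q⟩ := (Nat.prime_two.prime.dvd_finset_prod_iff _).mp h2t
      have hqP : q.Prime := (Finset.mem_filter.1 (Finset.mem_of_mem_erase hq)).2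
      exact (Finset.ne_of_mem_erase hq)
        ((Nat.prime_dvd_prime_iff_eq Nat.prime_two hqP).mp h2q).symm
    have ht1 : t % 2 = 1 := Nat.two_dvd_ne_zero.mp hodd
    omega
  -- the embedding
  set e : Fin 6 ↪ Fin n := Fin.castLEEmb hn with he
  set ι : Equiv.Perm (Fin 6) →* Equiv.Perm (Fin n) := Equiv.Perm.viaEmbeddingHom e with hι
  set σ : Equiv.Perm (Fin n) := ι sig6 with hσ
  have hσ4 : σ ^ 4 = 1 := by rw [hσ, ← map_pow, sig6_pow_four, map_one]
  have hσm : σ ^ m = σ ^ 2 := by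
    conv_lhs => rw [← Nat.div_add_mod m 4]
    rw [pow_add, pow_mul, hσ4, one_pow, one_mul, hm2]
  set f : Fin 4 → Equiv.Perm (Fin n) := ![σ, 1, ι tau2, ι tau3] with hf
  have hu0 : Function.update f 0 σ 0 = σ := Function.update_self _ _ _
  have hu1 : Function.update f 0 σ 1 = 1 := by
    rw [Function.update_of_ne (by decide)]; rfl
  have hu2 : Function.update f 0 σ 2 = ι tau2 := by
    rw [Function.update_of_ne (by decide)]; rfl
  have hu3 : Function.update f 0 σ 3 = ι tau3 := by
    rw [Function.update_of_ne (by decide)]; rfl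
  have hfix : verbalMap (w₁ * w₂ * w₃) f σ = σ := by
    simp only [verbalMap, h₁, h₂, h₃, map_mul, map_pow, map_inv, FreeGroup.lift_apply_of,
      hu0, hu1, hu2, hu3, one_mul, inv_one, mul_one]
    rw [hσm, hσ]
    simp only [← map_pow, ← map_inv, ← map_mul]
    exact congrArg ι key_identity
  intro hid
  obtain ⟨d, hd1, hd⟩ := hid f
  have hf0 : f 0 = σ := rfl
  rw [hf0, Function.iterate_fixed hfix] at hd
  have : sig6 = 1 := Equiv.Perm.viaEmbeddingHom_injective e (by rw [map_one]; exact hd)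
  exact sig6_ne_one this
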